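/- Let A be a semantically deterministic generalised coBüchi automaton with colour set C recognising L ⊆ Σ^ω, and let R be a recurrent residual of L. Then for every state q of A recognising R, the localisation A|_R with initial state q recognises the language {w ∈ (Σ_R)^ω : w ∈ R} (identifying words over Σ_R with words over Σ); moreover, if A with initial state q is history-deterministic, then A|_R with initial state q is history-deterministic. -/

import Mathlib

/-- A transition of an automaton: source state, input letter, output colour,
destination state.  (Acceptance is transition-based.) -/
structure AutTrans (Q A Γ : Type) where
  src : Q
  lab : A
  out : Γ
  dst : Q

/-- An (ω-)automaton with finite state set `Q`, input alphabet `A`,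
output alphabet `Γ`, initial state `init`, transition set `delta` and
acceptance condition `acc ⊆ Γ^ω`. -/
structure Automaton (A Γ : Type) where
  Q : Type
  fin : Fintype Q
  init : Q
  delta : Set (AutTrans Q A Γ)
  acc : Set (ℕ → Γ)

/-- The generalised Büchi condition over the colour set `C`
(output alphabet `𝒫(C)`): every colour appears infinitely often. -/
def genBuchi (C : Type) : Set (ℕ → Set C) :=
  {f | ∀ c : C, ∀ n : ℕ, ∃ m : ℕ, n ≤ m ∧ c ∈ f m}

/-- The generalised coBüchi condition over the colour set `C`:
some colour appears only finitely often. -/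
def genCoBuchi (C : Type) : Set (ℕ → Set C) :=
  {f | ∃ c : C, ∃ n : ℕ, ∀ m : ℕ, n ≤ m → c ∉ f m}

namespace Automaton

variable {A Γ : Type}

/-- Number of states. -/
def size (M : Automaton A Γ) : ℕ := @Fintype.card M.Q M.fin

/-- `ρ` is a run of `M` on the word `w`, starting in the state `q`. -/
def IsRunFrom (M : Automaton A Γ) (q : M.Q) (w : ℕ → A)
    (ρ : ℕ → AutTrans M.Q A Γ) : Prop :=
  (ρ 0).src = q ∧ ∀ n : ℕ, ρ n ∈ M.delta ∧ (ρ n).lab = w n ∧ (ρ n).dst = (ρ (n + 1)).src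

/-- The language of `M` with initial state `q`. -/
def LangFrom (M : Automaton A Γ) (q : M.Q) : Set (ℕ → A) :=
  {w | ∃ ρ : ℕ → AutTrans M.Q A Γ, M.IsRunFrom q w ρ ∧ (fun n => (ρ n).out) ∈ M.acc}

/-- The language of `M`. -/
def Lang (M : Automaton A Γ) : Set (ℕ → A) := M.LangFrom M.init

/-- For every state and letter there is at most one outgoing transition. -/
def Deterministic (M : Automaton A Γ) : Prop :=
  ∀ t ∈ M.delta, ∀ t' ∈ M.delta, t.src = t'.src → t.lab = t'.lab → t = t'

/-- For every state and letter there is at least one outgoing transition. -/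
def Complete (M : Automaton A Γ) : Prop :=
  ∀ (p : M.Q) (a : A), ∃ t ∈ M.delta, t.src = p ∧ t.lab = a

/-- The infinite sequence of transitions chosen by a resolver `r` on the word `w`
(`r` is applied to all nonempty finite prefixes of `w`). -/
def resRun (M : Automaton A Γ) (r : List A → AutTrans M.Q A Γ) (w : ℕ → A) :
    ℕ → AutTrans M.Q A Γ :=
  fun n => r (List.ofFn fun i : Fin (n + 1) => w i)

/-- `r` is a resolver for `M`: on every word it induces a run,
which is accepting whenever the word is in the language of `M`. -/
def IsResolver (M : Automaton A Γ) (r : List A → AutTrans M.Q A Γ) : Prop :=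
  ∀ w : ℕ → A, M.IsRunFrom M.init w (M.resRun r w) ∧
    (w ∈ M.Lang → (fun n => (M.resRun r w n).out) ∈ M.acc)

/-- History-determinism: existence of a resolver. -/
def HistoryDeterministic (M : Automaton A Γ) : Prop := ∃ r, M.IsResolver r

/-- `M` admits a resolver such that every state occurs on some accepting run
induced by the resolver. -/
def ResolverTrim (M : Automaton A Γ) : Prop :=
  ∃ r, M.IsResolver r ∧ ∀ q : M.Q, ∃ w ∈ M.Lang, ∃ n : ℕ, (M.resRun r w n).src = q

/-- Reachability along transitions of `M`. -/
def Reach (M : Automaton A Γ) (p q : M.Q) : Prop :=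
  Relation.ReflTransGen (fun x y => ∃ t ∈ M.delta, t.src = x ∧ t.dst = y) p q

/-- Nondeterministic choices lead to language-equivalent states. -/
def SemanticallyDeterministic (M : Automaton A Γ) : Prop :=
  ∀ t ∈ M.delta, ∀ t' ∈ M.delta, t.src = t'.src → t.lab = t'.lab →
    M.LangFrom t.dst = M.LangFrom t'.dst

/- CoBüchi notions: a coBüchi automaton has output alphabet `Set Unit`
(`𝒫(C)` with `|C| = 1`); a transition is a coBüchi transition iff its output
is `{()}` (i.e. `() ∈ out`), and safe iff its output is `∅`. -/

/-- A safe (non-coBüchi) transition from `p` to `q`. -/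
def SafeStep (M : Automaton A (Set Unit)) (p q : M.Q) : Prop :=
  ∃ t ∈ M.delta, t.src = p ∧ t.dst = q ∧ () ∉ t.out

/-- `p` and `q` lie in the same safe component (same SCC of the safe graph). -/
def SafeConn (M : Automaton A (Set Unit)) (p q : M.Q) : Prop :=
  Relation.ReflTransGen M.SafeStep p q ∧ Relation.ReflTransGen M.SafeStep q p

/-- The safe component (as a set of states) of `q`. -/
def safeComponentOf (M : Automaton A (Set Unit)) (q : M.Q) : Set M.Q :=
  {p | M.SafeConn p q}

/-- `(S, D)` is a safe component of `M`, given with its set of safe transitions. -/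
def IsSafeComponent (M : Automaton A (Set Unit)) (S : Set M.Q)
    (D : Set (AutTrans M.Q A (Set Unit))) : Prop :=
  (∃ q : M.Q, S = M.safeComponentOf q) ∧
    D = {t | t ∈ M.delta ∧ t.src ∈ S ∧ t.dst ∈ S ∧ () ∉ t.out}

/-- The safe language of the state `q`: words labelling an infinite safe path from `q`. -/
def SafeLang (M : Automaton A (Set Unit)) (q : M.Q) : Set (ℕ → A) :=
  {w | ∃ ρ : ℕ → AutTrans M.Q A (Set Unit),
    M.IsRunFrom q w ρ ∧ ∀ n : ℕ, () ∉ (ρ n).out}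

/-- The automaton restricted to safe transitions is deterministic. -/
def SafeDeterministic (M : Automaton A (Set Unit)) : Prop :=
  ∀ t ∈ M.delta, ∀ t' ∈ M.delta, () ∉ t.out → () ∉ t'.out →
    t.src = t'.src → t.lab = t'.lab → t = t'

/-- Every transition joining two distinct safe components is a coBüchi transition. -/
def NormalForm (M : Automaton A (Set Unit)) : Prop :=
  ∀ t ∈ M.delta, () ∉ t.out → M.SafeConn t.src t.dst

/-- A coBüchi automaton is nice if all states are reachable and it is
semantically deterministic, in normal form, and safe deterministic. -/
def Nice (M : Automaton A (Set Unit)) : Prop :=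
  (∀ q : M.Q, M.Reach M.init q) ∧ M.SemanticallyDeterministic ∧
    M.NormalForm ∧ M.SafeDeterministic

/-- Equivalent states with equal safe languages are equal. -/
def SafeMinimal (M : Automaton A (Set Unit)) : Prop :=
  ∀ p q : M.Q, M.LangFrom p = M.LangFrom q → M.SafeLang p = M.SafeLang q → p = q

/-- Equivalent states with safe languages comparable for inclusion lie in the
same safe component. -/
def SafeCentralised (M : Automaton A (Set Unit)) : Prop :=
  ∀ p q : M.Q, M.LangFrom p = M.LangFrom q →
    (M.SafeLang p ⊆ M.SafeLang q ∨ M.SafeLang q ⊆ M.SafeLang p) → M.SafeConn p q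

end Automaton

/-- The word `u · w`. -/
def wordAppend {A : Type} (u : List A) (w : ℕ → A) : ℕ → A :=
  fun n => if h : n < u.length then u.get ⟨n, h⟩ else w (n - u.length)

/-- The residual `u⁻¹L`. -/
def residualLang {A : Type} (u : List A) (L : Set (ℕ → A)) : Set (ℕ → A) :=
  {w | wordAppend u w ∈ L}

/-- `L` is prefix-independent: `u⁻¹L = L` for every finite word `u`. -/
def PrefixIndependent {A : Type} (L : Set (ℕ → A)) : Prop :=
  ∀ u : List A, residualLang u L = L

/-- The local alphabet `Σ_R` at the residual `R`: nonempty finite words `v`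
with `v⁻¹R = R` such that no proper nonempty prefix `v'` of `v`
satisfies `v'⁻¹R = R`.  (For `R = u⁻¹L` this says `(uv)⁻¹L = u⁻¹L` and
`(uv')⁻¹L ≠ u⁻¹L` for proper nonempty prefixes.) -/
def localAlphabet {A : Type} (R : Set (ℕ → A)) : Set (List A) :=
  {v | v ≠ [] ∧ residualLang v R = R ∧
    ∀ v' : List A, v' <+: v → v' ≠ [] → v' ≠ v → residualLang v' R ≠ R}

/-- `PathCol M q w X p`: there is a finite path of `M` from `q` to `p`
labelled by `w` whose transitions produce exactly the set of colours `X`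
(the union of the outputs along the path). -/
inductive PathCol {A C : Type} (M : Automaton A (Set C)) :
    M.Q → List A → Set C → M.Q → Prop
  | nil (q : M.Q) : PathCol M q [] ∅ q
  | cons {q r : M.Q} {a : A} {w : List A} {X : Set C}
      (t : AutTrans M.Q A (Set C)) (ht : t ∈ M.delta) (hsrc : t.src = q)
      (hlab : t.lab = a) (htail : PathCol M t.dst w X r) :
      PathCol M q (a :: w) (t.out ∪ X) r

/-- The localisation `A|_R` of a generalised coBüchi automaton `M` to the
residual `R`, with initial state `q0`: states are the states of `M`
recognising `R`, the alphabet is `Σ_R`, and there is a transition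
`q →^{w:X} p` for every finite path of `M` from `q` to `p` labelled by
`w ∈ Σ_R` producing the set of colours `X`. -/
noncomputable def localAut {A C : Type} (M : Automaton A (Set C)) (R : Set (ℕ → A))
    (q0 : {q : M.Q // M.LangFrom q = R}) :
    Automaton (↥(localAlphabet R)) (Set C) where
  Q := {q : M.Q // M.LangFrom q = R}
  fin := by
    letI := M.fin
    classical
    infer_instance
  init := q0
  delta := {t | PathCol M t.src.1 t.lab.1 t.out t.dst.1}
  acc := genCoBuchi C

/-- The automaton `M` with initial state `q`. -/
def withInit {A Γ : Type} (M : Automaton A Γ) (q : M.Q) : Automaton A Γ :=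
  { M with init := q }

/-- Recolour the automaton `M` via `f`, keeping states, initial state and the
underlying transitions, and replacing the acceptance condition by `acc'`. -/
def recolor {A Γ Γ' : Type} (M : Automaton A Γ) (f : AutTrans M.Q A Γ → Γ')
    (acc' : Set (ℕ → Γ')) : Automaton A Γ' where
  Q := M.Q
  fin := M.fin
  init := M.init
  delta := {t' | ∃ t ∈ M.delta, t'.src = t.src ∧ t'.lab = t.lab ∧ t'.out = f t ∧ t'.dst = t.dst}
  acc := acc'

/-- Concatenation of the first `k` blocks of a sequence of finite words. -/
def flattenPrefix {A : Type} (u : ℕ → List A) (k : ℕ) : List A :=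
  (List.ofFn fun i : Fin k => u i).flatten

/-- `x ∈ A^ω` is the concatenation of the infinite sequence of finite words `u`. -/
def IsFlatten {A : Type} (u : ℕ → List A) (x : ℕ → A) : Prop :=
  ∀ (k n : ℕ) (h : n < (flattenPrefix u k).length),
    (flattenPrefix u k).get ⟨n, h⟩ = x n

/-- Cascade composition `B ∘ M`: the outputs of `M` are fed as inputs to `B`. -/
def composeAut {A Γ Γ' : Type} (B : Automaton Γ Γ') (M : Automaton A Γ) :
    Automaton A Γ' where
  Q := M.Q × B.Q
  fin := by letI := M.fin; letI := B.fin; infer_instance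
  init := (M.init, B.init)
  delta := {t | ∃ tM ∈ M.delta, ∃ tB ∈ B.delta,
    t.src = (tM.src, tB.src) ∧ t.lab = tM.lab ∧ tB.lab = tM.out ∧
    t.out = tB.out ∧ t.dst = (tM.dst, tB.dst)}
  acc := B.acc

/-- The language `L_G = ⋂_v L_v` associated with a graph `G`: words over the
vertices such that for every vertex `v`, either the factor `vv` occurs
infinitely often, or letters outside the closed neighbourhood `N[v]` occur
infinitely often. -/
def LG {V : Type} (G : SimpleGraph V) : Set (ℕ → V) :=
  {w | ∀ v : V, (∀ n : ℕ, ∃ m : ℕ, n ≤ m ∧ w m = v ∧ w (m + 1) = v) ∨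
      (∀ n : ℕ, ∃ m : ℕ, n ≤ m ∧ w m ≠ v ∧ ¬ G.Adj v (w m))}

section Aux
variable {A C : Type}

lemma wordAppend_nil (w : ℕ → A) : wordAppend ([] : List A) w = w := by
  funext n; simp [wordAppend]

lemma wordAppend_append (u v : List A) (w : ℕ → A) :
    wordAppend (u ++ v) w = wordAppend u (wordAppend v w) := by
  funext n
  simp only [wordAppend, List.length_append]
  rcases lt_or_ge n u.length with h | h
  · rw [dif_pos (by omega), dif_pos h]
    simp [List.getElem_append_left h]
  · rw [dif_neg (by omega : ¬ n < u.length)]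
    rcases lt_or_ge n (u.length + v.length) with h2 | h2
    · rw [dif_pos h2, dif_pos (by omega : n - u.length < v.length)]
      simp only [List.get_eq_getElem]
      rw [List.getElem_append_right (by omega)]
    · rw [dif_neg (by omega), dif_neg (by omega)]
      congr 1; omega

lemma residualLang_nil (L : Set (ℕ → A)) : residualLang ([] : List A) L = L := by
  ext w; simp [residualLang, wordAppend_nil]

lemma residualLang_append (u v : List A) (L : Set (ℕ → A)) :
    residualLang (u ++ v) L = residualLang v (residualLang u L) := by
  ext w; simp [residualLang, wordAppend_append]

lemma genCoBuchi_shift_iff (f : ℕ → Set C) :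
    f ∈ genCoBuchi C ↔ (fun n => f (n + 1)) ∈ genCoBuchi C := by
  constructor
  · rintro ⟨c, n, h⟩; exact ⟨c, n, fun m hm => h (m + 1) (by omega)⟩
  · rintro ⟨c, n, h⟩
    refine ⟨c, n + 1, fun m hm => ?_⟩
    have := h (m - 1) (by omega)
    simpa [Nat.sub_add_cancel (by omega : 1 ≤ m)] using this

namespace Automaton

lemma langFrom_cons (M : Automaton A (Set C)) (hacc : M.acc = genCoBuchi C)
    (p : M.Q) (a : A) (w : ℕ → A) :
    wordAppend [a] w ∈ M.LangFrom p ↔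
      ∃ t ∈ M.delta, t.src = p ∧ t.lab = a ∧ w ∈ M.LangFrom t.dst := by
  have hwa0 : wordAppend [a] w 0 = a := by simp [wordAppend]
  have hwas : ∀ n, wordAppend [a] w (n + 1) = w n := by
    intro n; simp [wordAppend]
  constructor
  · rintro ⟨ρ, ⟨hsrc, hstep⟩, haccm⟩
    refine ⟨ρ 0, (hstep 0).1, hsrc, by rw [(hstep 0).2.1, hwa0], ?_⟩
    refine ⟨fun n => ρ (n + 1), ⟨((hstep 0).2.2).symm, fun n => ?_⟩, ?_⟩
    · exact ⟨(hstep (n + 1)).1, by rw [(hstep (n + 1)).2.1, hwas], (hstep (n + 1)).2.2⟩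
    · rw [hacc] at haccm ⊢
      exact (genCoBuchi_shift_iff _).1 haccm
  · rintro ⟨t, ht, hsrc, hlab, ρ, ⟨hsrc', hstep⟩, haccm⟩
    refine ⟨fun n => Nat.rec t (fun k _ => ρ k) n, ⟨hsrc, fun n => ?_⟩, ?_⟩
    · cases n with
      | zero => exact ⟨ht, by show t.lab = _; rw [hlab, hwa0], hsrc'.symm⟩
      | succ k => exact ⟨(hstep k).1, by show (ρ k).lab = _; rw [(hstep k).2.1, hwas], (hstep k).2.2⟩
    · rw [hacc] at haccm ⊢
      rcases haccm with ⟨c, n, h⟩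
      exact ⟨c, n + 1, fun m hm => by
        obtain ⟨k, rfl⟩ : ∃ k, m = k + 1 := ⟨m - 1, by omega⟩
        exact h k (by omega)⟩

lemma sd_residual (M : Automaton A (Set C)) (hacc : M.acc = genCoBuchi C)
    (hsd : M.SemanticallyDeterministic) {t : AutTrans M.Q A (Set C)} (ht : t ∈ M.delta) :
    M.LangFrom t.dst = residualLang [t.lab] (M.LangFrom t.src) := by
  ext w
  constructor
  · intro hw
    exact (M.langFrom_cons hacc t.src t.lab w).2 ⟨t, ht, rfl, rfl, hw⟩
  · intro hw
    obtain ⟨t', ht', hsrc', hlab', hw'⟩ := (M.langFrom_cons hacc t.src t.lab w).1 hw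
    rw [hsd t' ht' t ht hsrc' hlab'] at hw'; exact hw'

/-- Along any run, the language of the visited states is the residual. -/
lemma run_state_lang (M : Automaton A (Set C)) (hacc : M.acc = genCoBuchi C)
    (hsd : M.SemanticallyDeterministic) (x : ℕ → A) (ρ : ℕ → AutTrans M.Q A (Set C))
    (hρ : ∀ n, ρ n ∈ M.delta ∧ (ρ n).lab = x n ∧ (ρ n).dst = (ρ (n + 1)).src) :
    ∀ n, M.LangFrom ((ρ n).src) =
      residualLang (List.ofFn fun i : Fin n => x i) (M.LangFrom ((ρ 0).src)) := by
  intro n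
  induction n with
  | zero => simp [residualLang_nil]
  | succ k ih =>
    have h1 : (ρ (k + 1)).src = (ρ k).dst := ((hρ k).2.2).symm
    rw [h1, M.sd_residual hacc hsd (hρ k).1, ih, (hρ k).2.1]
    rw [show (List.ofFn fun i : Fin (k+1) => x i) =
      (List.ofFn fun i : Fin k => x i) ++ [x k] from ?_]
    · rw [residualLang_append]
    · rw [List.ofFn_succ']
      simp [List.concat_eq_append]

end Automaton
end Aux
section Flatten
variable {A : Type}

/-- Position of the start of block `k`. -/
def fpos (u : ℕ → List A) (k : ℕ) : ℕ := (flattenPrefix u k).length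

lemma flattenPrefix_zero (u : ℕ → List A) : flattenPrefix u 0 = [] := by
  simp [flattenPrefix]

lemma flattenPrefix_succ (u : ℕ → List A) (k : ℕ) :
    flattenPrefix u (k + 1) = flattenPrefix u k ++ u k := by
  unfold flattenPrefix
  rw [List.ofFn_succ']
  simp [List.concat_eq_append]

lemma fpos_zero (u : ℕ → List A) : fpos u 0 = 0 := by simp [fpos, flattenPrefix_zero]

lemma fpos_succ (u : ℕ → List A) (k : ℕ) :
    fpos u (k + 1) = fpos u k + (u k).length := by
  simp [fpos, flattenPrefix_succ]

lemma fpos_mono (u : ℕ → List A) {k k' : ℕ} (h : k ≤ k') : fpos u k ≤ fpos u k' := by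
  induction k' with
  | zero => have hk : k = 0 := by omega
            subst hk; exact le_rfl
  | succ m ih =>
    rcases Nat.lt_or_ge k (m+1) with h2 | h2
    · have h3 := ih (by omega)
      rw [fpos_succ]; omega
    · have hk : k = m + 1 := by omega
      subst hk; exact le_rfl

lemma fpos_ge (u : ℕ → List A) (hne : ∀ k, u k ≠ []) (k : ℕ) : k ≤ fpos u k := by
  induction k with
  | zero => omega
  | succ m ih =>
    have : 0 < (u m).length := List.length_pos_iff.2 (hne m)
    rw [fpos_succ]; omega

/-- Block index and offset of a position. -/
def blk (u : ℕ → List A) : ℕ → ℕ × ℕ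
  | 0 => (0, 0)
  | n + 1 =>
    if (blk u n).2 + 1 < (u (blk u n).1).length then ((blk u n).1, (blk u n).2 + 1)
    else ((blk u n).1 + 1, 0)

lemma blk_spec (u : ℕ → List A) (hne : ∀ k, u k ≠ []) (n : ℕ) :
    n = fpos u (blk u n).1 + (blk u n).2 ∧ (blk u n).2 < (u (blk u n).1).length := by
  induction n with
  | zero =>
    exact ⟨by simp [blk, fpos_zero], List.length_pos_iff.2 (hne 0)⟩
  | succ m ih =>
    by_cases h : (blk u m).2 + 1 < (u (blk u m).1).length
    · rw [blk, if_pos h]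
      exact ⟨by simp; omega, h⟩
    · rw [blk, if_neg h]
      refine ⟨?_, List.length_pos_iff.2 (hne _)⟩
      simp only [fpos_succ]
      omega

lemma blk_unique (u : ℕ → List A) (hne : ∀ k, u k ≠ []) {n k : ℕ}
    (h1 : fpos u k ≤ n) (h2 : n < fpos u (k + 1)) : (blk u n).1 = k := by
  obtain ⟨hn, hlt⟩ := blk_spec u hne n
  set k' := (blk u n).1 with hk'
  have h1' : fpos u k' ≤ n := by omega
  have h2' : n < fpos u (k' + 1) := by rw [fpos_succ]; omega
  by_contra hne2
  rcases Nat.lt_or_ge k' k with h | h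
  · have := fpos_mono u (show k' + 1 ≤ k by omega); omega
  · have : k < k' := by omega
    have := fpos_mono u (show k + 1 ≤ k' by omega); omega

lemma getElem_flattenPrefix (u : ℕ → List A) {k k' i : ℕ} (hkk : k' < k)
    (hi : i < (u k').length) (h : fpos u k' + i < (flattenPrefix u k).length) :
    (flattenPrefix u k)[fpos u k' + i] = (u k')[i] := by
  induction k with
  | zero => omega
  | succ m ih =>
    rw [List.getElem_of_eq (flattenPrefix_succ u m) h]
    rcases Nat.lt_or_ge k' m with h2 | h2
    · have hlen : fpos u k' + i < (flattenPrefix u m).length := by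
        have := fpos_mono u (show k' + 1 ≤ m by omega)
        rw [fpos_succ] at this
        show _ < fpos u m
        omega
      rw [List.getElem_append_left hlen]
      exact ih h2 hlen
    · have : k' = m := by omega
      subst this
      have hl : (flattenPrefix u k').length ≤ fpos u k' + i := le_self_add
      rw [List.getElem_append_right hl]
      congr 1
      show fpos u k' + i - fpos u k' = i
      omega

/-- The infinite word obtained by flattening the blocks (default `a₀`). -/
def flatSeq (u : ℕ → List A) (a₀ : A) : ℕ → A :=
  fun n => (u (blk u n).1).getD (blk u n).2 a₀

lemma isFlatten_flatSeq (u : ℕ → List A) (hne : ∀ k, u k ≠ []) (a₀ : A) :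
    IsFlatten u (flatSeq u a₀) := by
  intro k n h
  obtain ⟨hn, hlt⟩ := blk_spec u hne n
  have hk : (blk u n).1 < k := by
    by_contra hc
    have h2 := fpos_mono u (show k ≤ (blk u n).1 by omega)
    have h3 : n < fpos u k := h
    omega
  have h' : fpos u (blk u n).1 + (blk u n).2 < (flattenPrefix u k).length := hn ▸ h
  have e1 : (flattenPrefix u k)[n]? = some ((u (blk u n).1)[(blk u n).2]) := by
    conv_lhs => rw [hn]
    rw [List.getElem?_eq_getElem h', getElem_flattenPrefix u hk hlt h']
  have e2 : (flattenPrefix u k)[n]? = some ((flattenPrefix u k).get ⟨n, h⟩) := by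
    rw [List.getElem?_eq_getElem h]; rfl
  rw [e2] at e1
  rw [Option.some.inj e1, flatSeq]
  exact (List.getD_eq_getElem _ _ hlt).symm

lemma isFlatten_get (u : ℕ → List A) {x : ℕ → A} (hx : IsFlatten u x)
    (k i : ℕ) (hi : i < (u k).length) :
    x (fpos u k + i) = (u k)[i] := by
  have h : fpos u k + i < (flattenPrefix u (k+1)).length := by
    show _ < fpos u (k+1); rw [fpos_succ]; omega
  have h2 := hx (k+1) (fpos u k + i) h
  rw [List.get_eq_getElem, getElem_flattenPrefix u (Nat.lt_succ_self k) hi h] at h2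
  exact h2.symm

lemma isFlatten_unique (u : ℕ → List A) (hne : ∀ k, u k ≠ []) {x y : ℕ → A}
    (hx : IsFlatten u x) (hy : IsFlatten u y) : x = y := by
  funext n
  have h : n < (flattenPrefix u (n+1)).length := by
    show _ < fpos u (n+1); have := fpos_ge u hne (n+1); omega
  rw [← hx (n+1) n h, ← hy (n+1) n h]

lemma flattenPrefix_eq_ofFn (u : ℕ → List A) {x : ℕ → A} (hx : IsFlatten u x) (k : ℕ) :
    flattenPrefix u k = List.ofFn fun i : Fin (fpos u k) => x i := by
  apply List.ext_getElem
  · simp [fpos]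
  · intro n h1 h2
    have h3 := hx k n h1
    rw [List.get_eq_getElem] at h3
    rw [List.getElem_ofFn, h3]

lemma take_ofFn_le (x : ℕ → A) {m n : ℕ} (h : m ≤ n) :
    (List.ofFn fun i : Fin n => x i).take m = List.ofFn fun i : Fin m => x i := by
  apply List.ext_getElem
  · simp; omega
  · intro i h1 h2
    rw [List.getElem_take, List.getElem_ofFn, List.getElem_ofFn]

lemma residual_flatten_blocks (R : Set (ℕ → A)) (bs : List ↥(localAlphabet R)) :
    residualLang ((bs.map Subtype.val).flatten) R = R := by
  induction bs with
  | nil => simp [residualLang_nil]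
  | cons b bs ih =>
    simp only [List.map_cons, List.flatten_cons]
    rw [residualLang_append, b.2.2.1, ih]

end Flatten
section Path
variable {A C : Type} {M : Automaton A (Set C)}

lemma PathCol.congr {p q : M.Q} {w : List A} {X X' : Set C}
    (h : PathCol M p w X q) (hX : X = X') : PathCol M p w X' q := hX ▸ h

/-- A segment of an infinite run yields a `PathCol`. -/
lemma run_seg_pathcol (ρ : ℕ → AutTrans M.Q A (Set C))
    (hρ : ∀ n, ρ n ∈ M.delta ∧ (ρ n).dst = (ρ (n + 1)).src) :
    ∀ (l m : ℕ), PathCol M ((ρ m).src) (List.ofFn fun i : Fin l => (ρ (m + i)).lab)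
      {c | ∃ i < l, c ∈ (ρ (m + i)).out} ((ρ (m + l)).src) := by
  intro l
  induction l with
  | zero =>
    intro m
    have : {c | ∃ i < 0, c ∈ (ρ (m + i)).out} = (∅ : Set C) := by
      ext c; simp
    rw [List.ofFn_zero, this]
    exact PathCol.nil _
  | succ l ih =>
    intro m
    have h1 := PathCol.cons (M := M) (a := (ρ m).lab)
      (w := List.ofFn fun i : Fin l => (ρ (m + 1 + i)).lab)
      (r := (ρ (m + 1 + l)).src) (ρ m) (hρ m).1 rfl rfl
      (by rw [(hρ m).2]; exact ih (m + 1))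
    have e1 : (List.ofFn fun i : Fin (l+1) => (ρ (m + i)).lab) =
        (ρ m).lab :: List.ofFn fun i : Fin l => (ρ (m + 1 + i)).lab := by
      have efun : (fun i : Fin l => (ρ (m + ↑i.succ)).lab)
          = fun i : Fin l => (ρ (m + 1 + ↑i)).lab := by
        funext i; congr 2; rw [Fin.val_succ]; omega
      rw [List.ofFn_succ, efun]
      simp
    have e2 : (ρ m).out ∪ {c | ∃ i < l, c ∈ (ρ (m + 1 + i)).out} =
        {c | ∃ i < l + 1, c ∈ (ρ (m + i)).out} := by
      ext c
      simp only [Set.mem_union, Set.mem_setOf_eq]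
      constructor
      · rintro (hc | ⟨i, hi, hc⟩)
        · exact ⟨0, by omega, by simpa using hc⟩
        · exact ⟨i + 1, by omega, by rw [show m + (i+1) = m + 1 + i by omega]; exact hc⟩
      · rintro ⟨i, hi, hc⟩
        rcases Nat.eq_zero_or_pos i with rfl | hpos
        · exact Or.inl (by simpa using hc)
        · exact Or.inr ⟨i - 1, by omega, by rw [show m + 1 + (i-1) = m + i by omega]; exact hc⟩
    have e3 : m + 1 + l = m + (l + 1) := by omega
    rw [e1, ← e2, ← e3]
    exact h1

/-- Extract the transitions of a `PathCol` as a function. -/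
lemma pathcol_elim (a₀ : A) {p q : M.Q} {w : List A} {X : Set C}
    (h : PathCol M p w X q) :
    ∃ σ : ℕ → AutTrans M.Q A (Set C),
      (∀ i, (hi : i < w.length) → σ i ∈ M.delta ∧ (σ i).lab = w[i]) ∧
      (∀ i, i + 1 < w.length → (σ i).dst = (σ (i + 1)).src) ∧
      (0 < w.length → (σ 0).src = p ∧ (σ (w.length - 1)).dst = q) ∧
      (w = [] → p = q) ∧
      X = {c | ∃ i < w.length, c ∈ (σ i).out} := by
  induction h with
  | nil q =>
    refine ⟨fun _ => ⟨q, a₀, ∅, q⟩, ?_, ?_, ?_, fun _ => rfl, ?_⟩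
    · intro i hi; simp at hi
    · intro i hi; simp at hi
    · intro h; simp at h
    · ext c; simp
  | @cons q r a w X t ht hsrc hlab htail ih =>
    obtain ⟨σ', h1, h2, h3, h4, h5⟩ := ih
    refine ⟨fun i => if i = 0 then t else σ' (i - 1), ?_, ?_, ?_, by simp, ?_⟩
    · intro i hi
      cases i with
      | zero => simpa using ⟨ht, hlab⟩
      | succ j =>
        simp only [List.length_cons] at hi
        have hj := h1 j (by omega)
        simpa using hj
    · intro i hi
      simp only [List.length_cons] at hi
      cases i with
      | zero =>
        have hw : 0 < w.length := by omega
        simp only [if_pos rfl, if_neg (Nat.succ_ne_zero 0)]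
        exact (h3 hw).1.symm
      | succ j =>
        simp only [if_neg (Nat.succ_ne_zero j), if_neg (Nat.succ_ne_zero (j+1))]
        have hj := h2 j (by omega)
        simpa using hj
    · intro _
      refine ⟨by simpa using hsrc, ?_⟩
      simp only [List.length_cons, Nat.add_sub_cancel]
      rcases Nat.eq_zero_or_pos w.length with hw | hw
      · have hwnil : w = [] := List.length_eq_zero_iff.1 hw
        rw [hw, if_pos rfl]
        exact h4 hwnil
      · rw [if_neg (by omega)]
        exact (h3 hw).2
    · ext c
      simp only [Set.mem_union, Set.mem_setOf_eq, List.length_cons]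
      constructor
      · rintro (hc | hc)
        · exact ⟨0, by omega, by simpa using hc⟩
        · rw [h5] at hc
          obtain ⟨i, hi, hc⟩ := hc
          exact ⟨i + 1, by omega, by simpa using hc⟩
      · rintro ⟨i, hi, hc⟩
        cases i with
        | zero => exact Or.inl (by simpa using hc)
        | succ j =>
          refine Or.inr ?_
          rw [h5]
          exact ⟨j, by omega, by simpa using hc⟩
end Path
section Part1
variable {A C : Type}

lemma localAut_lang (M : Automaton A (Set C)) (hacc : M.acc = genCoBuchi C)
    (hsd : M.SemanticallyDeterministic)
    (R : Set (ℕ → A)) (q : M.Q) (hq : M.LangFrom q = R) :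
    (localAut M R ⟨q, hq⟩).Lang =
      {u : ℕ → ↥(localAlphabet R) |
        ∃ x : ℕ → A, IsFlatten (fun n => (u n).1) x ∧ x ∈ R} := by
  ext u
  have hne : ∀ n, (fun n => (u n).1) n ≠ [] := fun n => (u n).2.1
  set un : ℕ → List A := fun n => (u n).1 with hun
  constructor
  · rintro ⟨σ, ⟨hinit, hstep⟩, haccm⟩
    obtain ⟨a₀⟩ : Nonempty A := ⟨(un 0).head (hne 0)⟩
    have hpc : ∀ n, PathCol M (σ n).src.1 (un n) (σ n).out (σ n).dst.1 := by
      intro n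
      have h1 : σ n ∈ (localAut M R ⟨q, hq⟩).delta := (hstep n).1
      have h2 : (σ n).lab = u n := (hstep n).2.1
      have h3 : PathCol M (σ n).src.1 ((σ n).lab).1 (σ n).out (σ n).dst.1 := h1
      rw [h2] at h3
      exact h3
    choose τ hτ using fun n => pathcol_elim a₀ (hpc n)
    set x : ℕ → A := flatSeq un a₀ with hx
    have hxf : IsFlatten un x := isFlatten_flatSeq un hne a₀
    set ρ : ℕ → AutTrans M.Q A (Set C) :=
      fun m => τ (blk un m).1 (blk un m).2 with hρ
    refine ⟨x, hxf, ?_⟩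
    rw [← hq]
    refine ⟨ρ, ⟨?_, ?_⟩, ?_⟩
    · show (τ (blk un 0).1 (blk un 0).2).src = q
      have hb0 : blk un 0 = (0, 0) := rfl
      rw [hb0]
      have := ((hτ 0).2.2.1 (List.length_pos_iff.2 (hne 0))).1
      rw [this, hinit]
      rfl
    · intro m
      obtain ⟨hm, hlt⟩ := blk_spec un hne m
      refine ⟨((hτ (blk un m).1).1 _ hlt).1, ?_, ?_⟩
      · have h1 := ((hτ (blk un m).1).1 _ hlt).2
        have h2 := isFlatten_get un hxf (blk un m).1 (blk un m).2 hlt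
        show (τ (blk un m).1 (blk un m).2).lab = x m
        rw [h1, ← h2, ← hm]
      · show (τ (blk un m).1 (blk un m).2).dst
          = (τ (blk un (m+1)).1 (blk un (m+1)).2).src
        by_cases h : (blk un m).2 + 1 < (un (blk un m).1).length
        · have hb : blk un (m+1) = ((blk un m).1, (blk un m).2 + 1) := by
            rw [blk, if_pos h]
          rw [hb]
          exact (hτ (blk un m).1).2.1 _ h
        · have hb : blk un (m+1) = ((blk un m).1 + 1, 0) := by
            rw [blk, if_neg h]
          rw [hb]
          have hlast : (blk un m).2 = (un (blk un m).1).length - 1 := by omega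
          have h1 := ((hτ (blk un m).1).2.2.1 (List.length_pos_iff.2 (hne _))).2
          have h2 := ((hτ ((blk un m).1 + 1)).2.2.1 (List.length_pos_iff.2 (hne _))).1
          rw [hlast, h1, h2]
          have h3 : (σ (blk un m).1).dst = (σ ((blk un m).1 + 1)).src :=
            (hstep (blk un m).1).2.2
          rw [h3]
    · rw [hacc]
      have haccm' : (fun n => (σ n).out) ∈ genCoBuchi C := haccm
      obtain ⟨c, N, hcN⟩ := haccm'
      refine ⟨c, fpos un N, fun m hm => ?_⟩
      obtain ⟨hmeq, hlt⟩ := blk_spec un hne m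
      have hkN : N ≤ (blk un m).1 := by
        by_contra hcon
        have h1 := fpos_mono un (show (blk un m).1 + 1 ≤ N by omega)
        rw [fpos_succ] at h1
        omega
      intro hcmem
      have h5 := (hτ (blk un m).1).2.2.2.2
      have : c ∈ (σ (blk un m).1).out := by
        rw [h5]
        exact ⟨(blk un m).2, hlt, hcmem⟩
      exact hcN _ hkN this
  · rintro ⟨x, hxf, hxR⟩
    have hx : x ∈ M.LangFrom q := by rw [hq]; exact hxR
    obtain ⟨ρ, ⟨hinit, hstep⟩, haccm⟩ := hx
    have hchain : ∀ n, ρ n ∈ M.delta ∧ (ρ n).dst = (ρ (n+1)).src :=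
      fun n => ⟨(hstep n).1, (hstep n).2.2⟩
    have hQ : ∀ k, M.LangFrom ((ρ (fpos un k)).src) = R := by
      intro k
      have h1 := M.run_state_lang hacc hsd x ρ
        (fun n => ⟨(hstep n).1, (hstep n).2.1, (hstep n).2.2⟩) (fpos un k)
      rw [hinit, hq, ← flattenPrefix_eq_ofFn un hxf k] at h1
      rw [h1]
      have h2 := residual_flatten_blocks R (List.ofFn fun i : Fin k => u i)
      rw [List.map_ofFn] at h2
      exact h2
    refine ⟨fun k => ⟨⟨(ρ (fpos un k)).src, hQ k⟩, u k,
        {c | ∃ i < (un k).length, c ∈ (ρ (fpos un k + i)).out},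
        ⟨(ρ (fpos un (k+1))).src, hQ (k+1)⟩⟩, ⟨?_, ?_⟩, ?_⟩
    · apply Subtype.ext
      show (ρ (fpos un 0)).src = q
      rw [fpos_zero]
      exact hinit
    · intro k
      refine ⟨?_, rfl, rfl⟩
      show PathCol M (ρ (fpos un k)).src (un k)
        {c | ∃ i < (un k).length, c ∈ (ρ (fpos un k + i)).out}
        (ρ (fpos un (k+1))).src
      have hpc := run_seg_pathcol ρ hchain (un k).length (fpos un k)
      have e1 : (List.ofFn fun i : Fin (un k).length => (ρ (fpos un k + ↑i)).lab)
          = un k := by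
        apply List.ext_getElem
        · simp
        · intro i h1 h2
          rw [List.getElem_ofFn]
          have := isFlatten_get un hxf k i h2
          rw [(hstep (fpos un k + i)).2.1, this]
      have e2 : fpos un k + (un k).length = fpos un (k + 1) := (fpos_succ un k).symm
      rw [e1, e2] at hpc
      exact hpc
    · show (fun k => _) ∈ genCoBuchi C
      rw [hacc] at haccm
      obtain ⟨c, N, hcN⟩ := haccm
      refine ⟨c, N, fun k hk => ?_⟩
      rintro ⟨i, hi, hc⟩
      have : N ≤ fpos un k + i := le_trans (le_trans hk (fpos_ge un hne k)) (Nat.le_add_right _ _)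
      exact hcN _ this hc

end Part1
section Aux5
variable {A C : Type}

lemma dropLast_ofFn {α : Type} {n : ℕ} (f : Fin (n + 1) → α) :
    (List.ofFn f).dropLast = List.ofFn fun i : Fin n => f i.castSucc := by
  rw [List.ofFn_succ']
  simp [List.concat_eq_append]

lemma getLast?_ofFn_getD {α : Type} {n : ℕ} (f : Fin (n + 1) → α) (d : α) :
    (List.ofFn f).getLast?.getD d = f (Fin.last n) := by
  rw [List.ofFn_succ', List.concat_eq_append, List.getLast?_append]
  · simp

lemma ofFn_wordAppend (l : List A) (w : ℕ → A) {m : ℕ} (hm : m ≤ l.length) :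
    (List.ofFn fun i : Fin m => wordAppend l w i) = l.take m := by
  apply List.ext_getElem
  · simp; omega
  · intro i h1 h2
    rw [List.getElem_ofFn, List.getElem_take]
    show wordAppend l w i = _
    rw [wordAppend, dif_pos (by simp at h2; omega : (i : ℕ) < l.length)]
    simp

lemma withInit_lang (M : Automaton A (Set C)) (q : M.Q) :
    (withInit M q).Lang = M.LangFrom q := rfl

lemma withInit_resRun (M : Automaton A (Set C)) (q : M.Q)
    (r : List A → AutTrans M.Q A (Set C)) (w : ℕ → A) (n : ℕ) :
    (withInit M q).resRun r w n = r (List.ofFn fun i : Fin (n + 1) => w i) := rfl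

/-- The destination of the resolver after reading a nonempty concatenation of
blocks of the local alphabet recognises `R`. -/
lemma rdst_lang (M : Automaton A (Set C)) (hacc : M.acc = genCoBuchi C)
    (hsd : M.SemanticallyDeterministic) (R : Set (ℕ → A)) (q : M.Q)
    (hq : M.LangFrom q = R) (r : List A → AutTrans M.Q A (Set C))
    (hr : (withInit M q).IsResolver r)
    (bs : List ↥(localAlphabet R)) (hbs : bs ≠ []) :
    M.LangFrom (r ((bs.map Subtype.val).flatten)).dst = R := by
  set fl : List A := (bs.map Subtype.val).flatten with hfl
  have hflpos : 0 < fl.length := by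
    obtain ⟨b, bs', rfl⟩ := List.exists_cons_of_ne_nil hbs
    have hb : b.1 ≠ [] := b.2.1
    simp only [hfl, List.map_cons, List.flatten_cons, List.length_append]
    have := List.length_pos_iff.2 hb
    omega
  obtain ⟨a₀⟩ : Nonempty A := ⟨fl.head (List.length_pos_iff.1 hflpos)⟩
  set w : ℕ → A := wordAppend fl (fun _ => a₀) with hw
  have hrun := (hr w).1
  obtain ⟨hinit, hstep⟩ := hrun
  set ρ : ℕ → AutTrans M.Q A (Set C) := (withInit M q).resRun r w with hρ
  have hsl := M.run_state_lang hacc hsd w ρ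
    (fun n => ⟨(hstep n).1, (hstep n).2.1, (hstep n).2.2⟩) fl.length
  have hinit' : (ρ 0).src = q := hinit
  rw [hinit', hq, ofFn_wordAppend fl _ le_rfl, List.take_length] at hsl
  have e1 : ρ (fl.length - 1) = r fl := by
    rw [hρ, withInit_resRun]
    congr 1
    have : fl.length - 1 + 1 = fl.length := by omega
    rw [this, ofFn_wordAppend fl _ le_rfl, List.take_length]
  have e2 : (ρ fl.length).src = (ρ (fl.length - 1)).dst := by
    have h3 := (hstep (fl.length - 1)).2.2
    have e3 : fl.length - 1 + 1 = fl.length := by omega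
    rw [e3] at h3
    exact h3.symm
  rw [e2, e1] at hsl
  rw [hsl, residual_flatten_blocks]

end Aux5
section Part2
variable {A C : Type}

lemma length_flattenPrefix (u : ℕ → List A) (k : ℕ) :
    (flattenPrefix u k).length = fpos u k := rfl

lemma localAut_hd (M : Automaton A (Set C)) (hacc : M.acc = genCoBuchi C)
    (hsd : M.SemanticallyDeterministic)
    (R : Set (ℕ → A)) (q : M.Q) (hq : M.LangFrom q = R)
    (hrec : (localAlphabet R).Nonempty)
    (hhd : (withInit M q).HistoryDeterministic) :
    (localAut M R ⟨q, hq⟩).HistoryDeterministic := by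
  classical
  obtain ⟨r, hr⟩ := hhd
  obtain ⟨v₀, hv₀⟩ := hrec
  set V : ↥(localAlphabet R) := ⟨v₀, hv₀⟩ with hV
  set stQ : List ↥(localAlphabet R) → (localAut M R ⟨q, hq⟩).Q :=
    fun bs => if h : bs = [] then ⟨q, hq⟩
      else ⟨(r ((bs.map Subtype.val).flatten)).dst,
        rdst_lang M hacc hsd R q hq r hr bs h⟩ with hstQ
  set lr : List ↥(localAlphabet R) →
      AutTrans (localAut M R ⟨q, hq⟩).Q ↥(localAlphabet R) (Set C) :=
    fun us => ⟨stQ us.dropLast, us.getLast?.getD V,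
      {c | ∃ i, ((us.dropLast.map Subtype.val).flatten).length ≤ i ∧
        i < ((us.map Subtype.val).flatten).length ∧
        c ∈ (r (((us.map Subtype.val).flatten).take (i + 1))).out},
      stQ us⟩ with hlr
  refine ⟨lr, ?_⟩
  intro u
  set un : ℕ → List A := fun n => (u n).1 with hun
  have hne : ∀ n, un n ≠ [] := fun n => (u n).2.1
  obtain ⟨a₀⟩ : Nonempty A := ⟨v₀.head hv₀.1⟩
  set x : ℕ → A := flatSeq un a₀ with hxdef
  have hxf : IsFlatten un x := isFlatten_flatSeq un hne a₀
  set ρ : ℕ → AutTrans M.Q A (Set C) := (withInit M q).resRun r x with hρdef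
  obtain ⟨⟨hinit, hstep⟩, hacc2⟩ := hr x
  have hinit' : (ρ 0).src = q := hinit
  have hstep' : ∀ n, ρ n ∈ M.delta ∧ (ρ n).lab = x n ∧ (ρ n).dst = (ρ (n + 1)).src :=
    hstep
  have hchain : ∀ n, ρ n ∈ M.delta ∧ (ρ n).dst = (ρ (n+1)).src :=
    fun n => ⟨(hstep' n).1, (hstep' n).2.2⟩
  have hBflat : ∀ k, ((List.ofFn fun i : Fin k => u i).map Subtype.val).flatten
      = flattenPrefix un k := by
    intro k
    rw [List.map_ofFn]
    rfl
  have hρ_eq : ∀ m, ρ m = r (List.ofFn fun i : Fin (m + 1) => x i) := fun m => rfl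
  have hstQB : ∀ k, (stQ (List.ofFn fun i : Fin k => u i)).1 = (ρ (fpos un k)).src := by
    intro k
    cases k with
    | zero =>
      have e0 : (List.ofFn fun i : Fin 0 => u i) = [] := List.ofFn_zero
      rw [e0]
      simp only [hstQ]
      show q = _
      rw [fpos_zero]
      exact hinit'.symm
    | succ n =>
      have hBne : (List.ofFn fun i : Fin (n + 1) => u i) ≠ [] := by
        apply List.ne_nil_of_length_pos
        simp
      simp only [hstQ]
      refine (congrArg Subtype.val (dif_neg hBne : _ = (⟨(r ((List.ofFn fun i : Fin (n + 1) => u i).map Subtype.val).flatten).dst, rdst_lang M hacc hsd R q hq r hr _ hBne⟩ : {q : M.Q // M.LangFrom q = R}))).trans ?_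
      show (r _).dst = _
      rw [hBflat, flattenPrefix_eq_ofFn un hxf (n + 1)]
      have hm : 1 ≤ fpos un (n + 1) :=
        le_trans (by omega) (fpos_ge un hne (n + 1))
      have e1 : fpos un (n + 1) - 1 + 1 = fpos un (n + 1) := by omega
      have e2 : ρ (fpos un (n + 1) - 1)
          = r (List.ofFn fun i : Fin (fpos un (n + 1) - 1 + 1) => x i) := rfl
      rw [e1] at e2
      rw [← e2]
      have h3 := (hstep' (fpos un (n + 1) - 1)).2.2
      rw [e1] at h3
      exact h3
  have hdrop : ∀ n : ℕ, (List.ofFn fun i : Fin (n + 1) => u i).dropLast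
      = List.ofFn fun i : Fin n => u i := by
    intro n
    rw [dropLast_ofFn]
    exact congrArg List.ofFn (funext fun i => rfl)
  have hlast : ∀ n : ℕ, ((List.ofFn fun i : Fin (n + 1) => u i).getLast?).getD V = u n := by
    intro n
    rw [getLast?_ofFn_getD]
    exact congrArg u (Fin.val_last n)
  have hrr : ∀ n, (localAut M R ⟨q, hq⟩).resRun lr u n
      = lr (List.ofFn fun i : Fin (n + 1) => u i) := fun n => rfl
  have hout : ∀ n, (lr (List.ofFn fun i : Fin (n + 1) => u i)).out
      = {c | ∃ i, fpos un n ≤ i ∧ i < fpos un (n + 1) ∧ c ∈ (ρ i).out} := by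
    intro n
    rw [hlr]
    show {c | ∃ i, _ ∧ _ ∧ _} = _
    ext c
    simp only [Set.mem_setOf_eq]
    constructor
    · rintro ⟨i, h1, h2, h3⟩
      rw [hdrop n, hBflat n, length_flattenPrefix] at h1
      rw [hBflat (n + 1), length_flattenPrefix] at h2
      refine ⟨i, h1, h2, ?_⟩
      have e : (((List.ofFn fun i : Fin (n + 1) => u i).map Subtype.val).flatten).take (i + 1)
          = List.ofFn fun j : Fin (i + 1) => x j := by
        rw [hBflat (n + 1), flattenPrefix_eq_ofFn un hxf (n + 1), take_ofFn_le x (by omega)]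
      rw [e] at h3
      rw [hρ_eq i]
      exact h3
    · rintro ⟨i, h1, h2, h3⟩
      refine ⟨i, ?_, ?_, ?_⟩
      · rw [hdrop n, hBflat n, length_flattenPrefix]
        exact h1
      · rw [hBflat (n + 1), length_flattenPrefix]
        exact h2
      · have e : (((List.ofFn fun i : Fin (n + 1) => u i).map Subtype.val).flatten).take (i + 1)
            = List.ofFn fun j : Fin (i + 1) => x j := by
          rw [hBflat (n + 1), flattenPrefix_eq_ofFn un hxf (n + 1), take_ofFn_le x (by omega)]
        rw [e]
        rw [hρ_eq i] at h3
        exact h3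
  have hsrcB : ∀ n, (lr (List.ofFn fun i : Fin (n + 1) => u i)).src.1
      = (ρ (fpos un n)).src := by
    intro n
    rw [hlr]
    show (stQ ((List.ofFn fun i : Fin (n + 1) => u i).dropLast)).1 = _
    rw [hdrop n]
    exact hstQB n
  have hdstB : ∀ n, (lr (List.ofFn fun i : Fin (n + 1) => u i)).dst.1
      = (ρ (fpos un (n + 1))).src := by
    intro n
    rw [hlr]
    exact hstQB (n + 1)
  refine ⟨⟨?_, ?_⟩, ?_⟩
  · rw [hrr 0]
    apply Subtype.ext
    show (lr (List.ofFn fun i : Fin 1 => u i)).src.1 = q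
    rw [hsrcB 0, fpos_zero]
    exact hinit'
  · intro n
    refine ⟨?_, ?_, ?_⟩
    · show PathCol M _ _ _ _
      rw [hrr n]
      rw [hsrcB n, hdstB n, hout n]
      have hlabeq : ((lr (List.ofFn fun i : Fin (n + 1) => u i)).lab).1 = un n := by
        rw [hlr]
        show (((List.ofFn fun i : Fin (n + 1) => u i).getLast?).getD V).1 = un n
        rw [hlast n]
      rw [hlabeq]
      have hpc := run_seg_pathcol ρ hchain (un n).length (fpos un n)
      have e1 : (List.ofFn fun i : Fin (un n).length => (ρ (fpos un n + ↑i)).lab) = un n := by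
        apply List.ext_getElem
        · simp
        · intro i h1 h2
          rw [List.getElem_ofFn]
          have h3 := isFlatten_get un hxf n i h2
          rw [(hstep' (fpos un n + i)).2.1, h3]
      have e2 : fpos un n + (un n).length = fpos un (n + 1) := (fpos_succ un n).symm
      rw [e1, e2] at hpc
      refine hpc.congr ?_
      ext c
      simp only [Set.mem_setOf_eq]
      constructor
      · rintro ⟨i, hi, hc⟩
        exact ⟨fpos un n + i, by omega, by rw [fpos_succ]; omega, hc⟩
      · rintro ⟨i, h1, h2, hc⟩
        refine ⟨i - fpos un n, ?_, ?_⟩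
        · rw [fpos_succ] at h2; omega
        · rw [show fpos un n + (i - fpos un n) = i by omega]
          exact hc
    · rw [hrr n]
      rw [hlr]
      show ((List.ofFn fun i : Fin (n + 1) => u i).getLast?).getD V = u n
      exact hlast n
    · rw [hrr n, hrr (n + 1), hlr]
      show stQ (List.ofFn fun i : Fin (n + 1) => u i)
        = stQ ((List.ofFn fun i : Fin (n + 2) => u i).dropLast)
      rw [hdrop (n + 1)]
  · intro huL
    rw [localAut_lang M hacc hsd R q hq] at huL
    obtain ⟨x', hx'f, hx'R⟩ := huL
    have hxx : x' = x := isFlatten_unique un hne hx'f hxf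
    have hxq : x ∈ (withInit M q).Lang := by
      rw [withInit_lang, hq, ← hxx]
      exact hx'R
    have haccx : (fun n => (ρ n).out) ∈ genCoBuchi C := by
      have := hacc2 hxq
      rw [show (withInit M q).acc = genCoBuchi C from hacc] at this
      exact this
    obtain ⟨c, N, hcN⟩ := haccx
    show (fun n => ((localAut M R ⟨q, hq⟩).resRun lr u n).out) ∈ genCoBuchi C
    refine ⟨c, N, fun n hn => ?_⟩
    intro hcmem
    simp only [hrr n, hout n] at hcmem
    obtain ⟨i, h1, h2, hc⟩ := hcmem
    have hNi : N ≤ i := le_trans (le_trans hn (fpos_ge un hne n)) h1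
    exact hcN i hNi hc

end Part2

/-- for a semantically deterministic generalised coBüchi automaton
`A` recognising `L` and a recurrent residual `R` of `L`, the localisation
`A|_R`, started in any state `q` recognising `R`, recognises
`{w ∈ (Σ_R)^ω | w ∈ R}` (identifying words over `Σ_R` with words over `Σ` by
concatenation); moreover, if `A` with initial state `q` is
history-deterministic, then so is `A|_R` with initial state `q`. -/
theorem stmt_9 {A C : Type} [Fintype C] (L : Set (ℕ → A))
    (M : Automaton A (Set C)) (hacc : M.acc = genCoBuchi C)
    (hsd : M.SemanticallyDeterministic) (hlang : M.Lang = L)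
    (R : Set (ℕ → A)) (hres : ∃ u : List A, residualLang u L = R)
    (hrec : (localAlphabet R).Nonempty)
    (q : M.Q) (hq : M.LangFrom q = R) :
    (localAut M R ⟨q, hq⟩).Lang =
      {u : ℕ → ↥(localAlphabet R) |
        ∃ x : ℕ → A, IsFlatten (fun n => (u n).1) x ∧ x ∈ R} ∧
    ((withInit M q).HistoryDeterministic →
      (localAut M R ⟨q, hq⟩).HistoryDeterministic) := by
  exact ⟨localAut_lang M hacc hsd R q hq, localAut_hd M hacc hsd R q hq hrec⟩
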